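/- arXiv:2408.13982 — 2 statements merged into one kernel-verified Lean document; each statement's English description precedes it below -/
import Mathlib

section
/- Let Ω ⊆ ℝ² be open, let q : Ω → ℝ be smooth with q_xy ≠ 0 on Ω, and suppose Sˣ, Sʸ : Ω → ℝ are smooth functions satisfying on Ω: (E1) ∂_y Sˣ + ∂_x Sʸ = 4 q_x q_y; (E2) ∂_x Sˣ = 2 q_x²; (E3) ∂_y Sʸ = 2 q_y², together with the identity x Sˣ + y Sʸ = 2 q². Then q satisfies Euler's relation x q_x + y q_y = q on Ω (i.e. q is homogeneous of degree 1). -/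
open Real Set

/-- Partial derivative in the first variable. -/
noncomputable def px (f : ℝ × ℝ → ℝ) : ℝ × ℝ → ℝ :=
  fun p => deriv (fun t => f (t, p.2)) p.1

/-- Partial derivative in the second variable. -/
noncomputable def py (f : ℝ × ℝ → ℝ) : ℝ × ℝ → ℝ :=
  fun p => deriv (fun t => f (p.1, t)) p.2

lemma hasDerivAt_px (f : ℝ × ℝ → ℝ) (p : ℝ × ℝ) (hf : DifferentiableAt ℝ f p) :
    HasDerivAt (fun t => f (t, p.2)) (fderiv ℝ f p (1, 0)) p.1 := by
  have h : HasDerivAt (fun t : ℝ => (t, p.2)) ((1 : ℝ), (0 : ℝ)) p.1 :=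
    HasDerivAt.prodMk (hasDerivAt_id p.1) (hasDerivAt_const p.1 p.2)
  simpa [Function.comp_def] using hf.hasFDerivAt.comp_hasDerivAt p.1 h

lemma hasDerivAt_py (f : ℝ × ℝ → ℝ) (p : ℝ × ℝ) (hf : DifferentiableAt ℝ f p) :
    HasDerivAt (fun t => f (p.1, t)) (fderiv ℝ f p (0, 1)) p.2 := by
  have h : HasDerivAt (fun t : ℝ => (p.1, t)) ((0 : ℝ), (1 : ℝ)) p.2 :=
    HasDerivAt.prodMk (hasDerivAt_const p.2 p.1) (hasDerivAt_id p.2)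
  simpa [Function.comp_def] using hf.hasFDerivAt.comp_hasDerivAt p.2 h

lemma px_eq (f : ℝ × ℝ → ℝ) (p : ℝ × ℝ) (hf : DifferentiableAt ℝ f p) :
    px f p = fderiv ℝ f p (1, 0) := (hasDerivAt_px f p hf).deriv

lemma py_eq (f : ℝ × ℝ → ℝ) (p : ℝ × ℝ) (hf : DifferentiableAt ℝ f p) :
    py f p = fderiv ℝ f p (0, 1) := (hasDerivAt_py f p hf).deriv

/-- if resolvents satisfying (E1)–(E3) also satisfy `x Sˣ + y Sʸ = 2q²`
and `q_xy ≠ 0`, then `q` satisfies Euler's relation `x q_x + y q_y = q`. -/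
theorem euler_relation_of_resolvent_identity
    (Ω : Set (ℝ × ℝ)) (hΩ : IsOpen Ω)
    (q Sx Sy : ℝ × ℝ → ℝ)
    (hq : ContDiffOn ℝ (⊤ : ℕ∞) q Ω)
    (hqxy : ∀ p ∈ Ω, py (px q) p ≠ 0)
    (hSx : ContDiffOn ℝ (⊤ : ℕ∞) Sx Ω)
    (hSy : ContDiffOn ℝ (⊤ : ℕ∞) Sy Ω)
    (hE1 : ∀ p ∈ Ω, py Sx p + px Sy p = 4 * px q p * py q p)
    (hE2 : ∀ p ∈ Ω, px Sx p = 2 * (px q p) ^ 2)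
    (hE3 : ∀ p ∈ Ω, py Sy p = 2 * (py q p) ^ 2)
    (hrel : ∀ p ∈ Ω, p.1 * Sx p + p.2 * Sy p = 2 * (q p) ^ 2) :
    ∀ p ∈ Ω, p.1 * px q p + p.2 * py q p = q p := by
  intro p hp
  have hmem : Ω ∈ nhds p := hΩ.mem_nhds hp
  have hqd : DifferentiableAt ℝ q p := (hq.contDiffAt hmem).differentiableAt (by simp)
  have hSxd : DifferentiableAt ℝ Sx p := (hSx.contDiffAt hmem).differentiableAt (by simp)
  have hSyd : DifferentiableAt ℝ Sy p := (hSy.contDiffAt hmem).differentiableAt (by simp)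
  -- x-direction derivative of the identity
  have hxnhd : ∀ᶠ t in nhds p.1, (t, p.2) ∈ Ω := by
    have hc : ContinuousAt (fun t : ℝ => (t, p.2)) p.1 :=
      (continuous_id.prodMk continuous_const).continuousAt
    have := hc hmem
    exact this
  have hynhd : ∀ᶠ t in nhds p.2, (p.1, t) ∈ Ω := by
    have hc : ContinuousAt (fun t : ℝ => (p.1, t)) p.2 :=
      (continuous_const.prodMk continuous_id).continuousAt
    have := hc hmem
    exact this
  have hqd1 := hasDerivAt_px q p hqd
  have hqd2 := hasDerivAt_py q p hqd
  set a := fderiv ℝ q p (1, 0) with ha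
  set b := fderiv ℝ q p (0, 1) with hb
  set Ax := fderiv ℝ Sx p (1, 0) with hAx
  set Ay := fderiv ℝ Sx p (0, 1) with hAy
  set Bx := fderiv ℝ Sy p (1, 0) with hBx
  set By := fderiv ℝ Sy p (0, 1) with hBy
  -- g(t) = t * Sx(t,y) + y * Sy(t,y) - 2 q(t,y)^2 vanishes near p.1
  have hgx : HasDerivAt
      (fun t => t * Sx (t, p.2) + p.2 * Sy (t, p.2) - 2 * (q (t, p.2)) ^ 2)
      (1 * Sx p + p.1 * Ax + p.2 * Bx - 2 * (2 * q p ^ 1 * a)) p.1 := by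
    have h1 := (hasDerivAt_id p.1).mul (hasDerivAt_px Sx p hSxd)
    have h2 := (hasDerivAt_px Sy p hSyd).const_mul p.2
    have h3 := ((hasDerivAt_px q p hqd).pow 2).const_mul 2
    have := (h1.add h2).sub h3
    simp only [Pi.add_def, Pi.sub_def, Pi.mul_def, id] at this
    simpa [mul_comm, mul_assoc, mul_left_comm] using this
  have hgx0 : (1 * Sx p + p.1 * Ax + p.2 * Bx - 2 * (2 * q p ^ 1 * a)) = 0 := by
    have heq : (fun t => t * Sx (t, p.2) + p.2 * Sy (t, p.2) - 2 * (q (t, p.2)) ^ 2)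
        =ᶠ[nhds p.1] fun _ => (0 : ℝ) := by
      filter_upwards [hxnhd] with t ht
      have := hrel (t, p.2) ht
      simp only at this ⊢
      linarith
    have hd := hgx.deriv
    rw [Filter.EventuallyEq.deriv_eq heq] at hd
    simpa using hd.symm
  have hgy : HasDerivAt
      (fun t => p.1 * Sx (p.1, t) + t * Sy (p.1, t) - 2 * (q (p.1, t)) ^ 2)
      (p.1 * Ay + (1 * Sy p + p.2 * By) - 2 * (2 * q p ^ 1 * b)) p.2 := by
    have h1 := (hasDerivAt_py Sx p hSxd).const_mul p.1
    have h2 := (hasDerivAt_id p.2).mul (hasDerivAt_py Sy p hSyd)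
    have h3 := ((hasDerivAt_py q p hqd).pow 2).const_mul 2
    have := (h1.add h2).sub h3
    simp only [Pi.add_def, Pi.sub_def, Pi.mul_def, id] at this
    simpa [mul_comm, mul_assoc, mul_left_comm] using this
  have hgy0 : (p.1 * Ay + (1 * Sy p + p.2 * By) - 2 * (2 * q p ^ 1 * b)) = 0 := by
    have heq : (fun t => p.1 * Sx (p.1, t) + t * Sy (p.1, t) - 2 * (q (p.1, t)) ^ 2)
        =ᶠ[nhds p.2] fun _ => (0 : ℝ) := by
      filter_upwards [hynhd] with t ht
      have := hrel (p.1, t) ht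
      simp only at this ⊢
      linarith
    have hd := hgy.deriv
    rw [Filter.EventuallyEq.deriv_eq heq] at hd
    simpa using hd.symm
  -- rewrite hypotheses in terms of fderiv values
  have e1 := hE1 p hp
  have e2 := hE2 p hp
  have e3 := hE3 p hp
  have erel := hrel p hp
  rw [px_eq q p hqd, py_eq q p hqd, ← ha, ← hb] at e1 ⊢
  rw [px_eq Sx p hSxd, px_eq q p hqd, ← hAx, ← ha] at e2
  rw [py_eq Sy p hSyd, py_eq q p hqd, ← hBy, ← hb] at e3
  rw [py_eq Sx p hSxd, px_eq Sy p hSyd, ← hAy, ← hBx] at e1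
  simp only [pow_one] at hgx0 hgy0
  have hs : (q p - (p.1 * a + p.2 * b)) ^ 2 = 0 := by
    linear_combination (p.1/2) * hgx0 + (p.2/2) * hgy0 - (1/2) * erel
      - (p.1^2/2) * e2 - (p.1*p.2/2) * e1 - (p.2^2/2) * e3
  have := pow_eq_zero_iff (n := 2) (by norm_num) |>.mp hs
  linarith [this]
end

section
/- Let Ω ⊆ ℝ² be open and convex, and let q : Ω → ℝ be smooth with q ≠ 0, q_yy ≠ 0, q_xy ≠ 0, and q_x q_yy − q_y q_xy ≠ 0 at every point of Ω. Suppose q satisfies the degenerate Monge–Ampère equation q_xx q_yy = (q_xy)² on Ω together with the third-order relation q · q_xy · q_yyy + q_y · q_xy · q_yy = q · q_yy · q_xyy + q_x · (q_yy)² on Ω. Then there exist constants x₀, y₀ ∈ ℝ such that (x − x₀) q_x + (y − y₀) q_y = q on Ω; that is, q is homogeneous of degree 1 after translating the coordinates by (x₀, y₀). -/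
open Real Set

lemma hasDerivAt_inc_x (p : ℝ × ℝ) : HasDerivAt (fun t : ℝ => (t, p.2)) ((1 : ℝ), (0 : ℝ)) p.1 :=
  (hasDerivAt_id p.1).prodMk (hasDerivAt_const p.1 p.2)

lemma hasDerivAt_inc_y (p : ℝ × ℝ) : HasDerivAt (fun t : ℝ => (p.1, t)) ((0 : ℝ), (1 : ℝ)) p.2 :=
  (hasDerivAt_const p.2 p.1).prodMk (hasDerivAt_id p.2)

lemma px_eq_fderiv {g : ℝ × ℝ → ℝ} {p : ℝ × ℝ} (hg : DifferentiableAt ℝ g p) :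
    px g p = fderiv ℝ g p (1, 0) :=
  (hg.hasFDerivAt.comp_hasDerivAt p.1 (hasDerivAt_inc_x p)).deriv

lemma py_eq_fderiv {g : ℝ × ℝ → ℝ} {p : ℝ × ℝ} (hg : DifferentiableAt ℝ g p) :
    py g p = fderiv ℝ g p (0, 1) :=
  (hg.hasFDerivAt.comp_hasDerivAt p.2 (hasDerivAt_inc_y p)).deriv

lemma hasDerivAt_slice_x {g : ℝ × ℝ → ℝ} {p : ℝ × ℝ} (hg : DifferentiableAt ℝ g p) :
    HasDerivAt (fun t => g (t, p.2)) (px g p) p.1 := by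
  rw [px_eq_fderiv hg]
  exact hg.hasFDerivAt.comp_hasDerivAt p.1 (hasDerivAt_inc_x p)

lemma hasDerivAt_slice_y {g : ℝ × ℝ → ℝ} {p : ℝ × ℝ} (hg : DifferentiableAt ℝ g p) :
    HasDerivAt (fun t => g (p.1, t)) (py g p) p.2 := by
  rw [py_eq_fderiv hg]
  exact hg.hasFDerivAt.comp_hasDerivAt p.2 (hasDerivAt_inc_y p)

lemma contDiffOn_px {Ω : Set (ℝ × ℝ)} (hΩ : IsOpen Ω) {g : ℝ × ℝ → ℝ}
    (hg : ContDiffOn ℝ (⊤ : ℕ∞) g Ω) : ContDiffOn ℝ (⊤ : ℕ∞) (px g) Ω := by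
  have h1 : ContDiffOn ℝ (⊤ : ℕ∞) (fun p => fderiv ℝ g p (1, 0)) Ω :=
    (hg.fderiv_of_isOpen hΩ (le_refl _)).clm_apply contDiffOn_const
  exact h1.congr fun p hp =>
    px_eq_fderiv ((hg.contDiffAt (hΩ.mem_nhds hp)).differentiableAt (by simp))

lemma contDiffOn_py {Ω : Set (ℝ × ℝ)} (hΩ : IsOpen Ω) {g : ℝ × ℝ → ℝ}
    (hg : ContDiffOn ℝ (⊤ : ℕ∞) g Ω) : ContDiffOn ℝ (⊤ : ℕ∞) (py g) Ω := by
  have h1 : ContDiffOn ℝ (⊤ : ℕ∞) (fun p => fderiv ℝ g p (0, 1)) Ω :=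
    (hg.fderiv_of_isOpen hΩ (le_refl _)).clm_apply contDiffOn_const
  exact h1.congr fun p hp =>
    py_eq_fderiv ((hg.contDiffAt (hΩ.mem_nhds hp)).differentiableAt (by simp))

lemma px_congr {Ω : Set (ℝ × ℝ)} (hΩ : IsOpen Ω) {h₁ h₂ : ℝ × ℝ → ℝ}
    (h : ∀ z ∈ Ω, h₁ z = h₂ z) {p : ℝ × ℝ} (hp : p ∈ Ω) : px h₁ p = px h₂ p := by
  have hc : ContinuousAt (fun t : ℝ => (t, p.2)) p.1 := by
    exact (continuous_id.prodMk continuous_const).continuousAt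
  have hev : (fun t => h₁ (t, p.2)) =ᶠ[nhds p.1] (fun t => h₂ (t, p.2)) := by
    have hmem : Ω ∈ nhds (p.1, p.2) := by
      rw [Prod.mk.eta]; exact hΩ.mem_nhds hp
    filter_upwards [hc.preimage_mem_nhds hmem] with t ht using h _ ht
  exact hev.deriv_eq

lemma py_congr {Ω : Set (ℝ × ℝ)} (hΩ : IsOpen Ω) {h₁ h₂ : ℝ × ℝ → ℝ}
    (h : ∀ z ∈ Ω, h₁ z = h₂ z) {p : ℝ × ℝ} (hp : p ∈ Ω) : py h₁ p = py h₂ p := by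
  have hc : ContinuousAt (fun t : ℝ => (p.1, t)) p.2 := by
    exact (continuous_const.prodMk continuous_id).continuousAt
  have hev : (fun t => h₁ (p.1, t)) =ᶠ[nhds p.2] (fun t => h₂ (p.1, t)) := by
    have hmem : Ω ∈ nhds (p.1, p.2) := by
      rw [Prod.mk.eta]; exact hΩ.mem_nhds hp
    filter_upwards [hc.preimage_mem_nhds hmem] with t ht using h _ ht
  exact hev.deriv_eq

lemma schwarz {Ω : Set (ℝ × ℝ)} (hΩ : IsOpen Ω) {g : ℝ × ℝ → ℝ}
    (hg : ContDiffOn ℝ (⊤ : ℕ∞) g Ω) {p : ℝ × ℝ} (hp : p ∈ Ω) :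
    px (py g) p = py (px g) p := by
  set F : ℝ × ℝ → (ℝ × ℝ) →L[ℝ] ℝ := fun x => fderiv ℝ g x with hF
  have hdiff : ∀ z ∈ Ω, DifferentiableAt ℝ g z := fun z hz =>
    (hg.contDiffAt (hΩ.mem_nhds hz)).differentiableAt (by simp)
  have hev : ∀ᶠ y in nhds p, HasFDerivAt g (F y) y := by
    filter_upwards [hΩ.mem_nhds hp] with y hy using (hdiff y hy).hasFDerivAt
  have hFc : ContDiffOn ℝ (⊤ : ℕ∞) F Ω := hg.fderiv_of_isOpen hΩ (le_refl _)
  have hFd : DifferentiableAt ℝ F p :=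
    (hFc.contDiffAt (hΩ.mem_nhds hp)).differentiableAt (by simp)
  have hsym := second_derivative_symmetric_of_eventually hev hFd.hasFDerivAt
  have key : ∀ v w : ℝ × ℝ,
      HasDerivAt (fun t => F (t, p.2) w) ((fderiv ℝ F p (1, 0)) w) p.1 ∧
      HasDerivAt (fun t => F (p.1, t) w) ((fderiv ℝ F p (0, 1)) w) p.2 := by
    intro v w
    constructor
    · exact (ContinuousLinearMap.apply ℝ ℝ w).hasFDerivAt.comp_hasDerivAt p.1
        (hFd.hasFDerivAt.comp_hasDerivAt p.1 (hasDerivAt_inc_x p))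
    · exact (ContinuousLinearMap.apply ℝ ℝ w).hasFDerivAt.comp_hasDerivAt p.2
        (hFd.hasFDerivAt.comp_hasDerivAt p.2 (hasDerivAt_inc_y p))
  have h1 : px (py g) p = (fderiv ℝ F p (1, 0)) (0, 1) := by
    have hcg : px (py g) p = px (fun x => F x (0, 1)) p :=
      px_congr hΩ (fun z hz => py_eq_fderiv (hdiff z hz)) hp
    rw [hcg]
    exact ((key 0 (0, 1)).1).deriv
  have h2 : py (px g) p = (fderiv ℝ F p (0, 1)) (1, 0) := by
    have hcg : py (px g) p = py (fun x => F x (1, 0)) p :=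
      py_congr hΩ (fun z hz => px_eq_fderiv (hdiff z hz)) hp
    rw [hcg]
    exact ((key 0 (1, 0)).2).deriv
  rw [h1, h2, hsym]

lemma slice_deriv_zero_x {Ω : Set (ℝ × ℝ)} (hΩ : IsOpen Ω) {A : ℝ × ℝ → ℝ}
    (hA : ∀ z ∈ Ω, A z = 0) {p : ℝ × ℝ} (hp : p ∈ Ω) {c : ℝ}
    (h : HasDerivAt (fun t => A (t, p.2)) c p.1) : c = 0 := by
  have hc : ContinuousAt (fun t : ℝ => (t, p.2)) p.1 :=
    (continuous_id.prodMk continuous_const).continuousAt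
  have hmem : Ω ∈ nhds (p.1, p.2) := by rw [Prod.mk.eta]; exact hΩ.mem_nhds hp
  have hev : (fun t => A (t, p.2)) =ᶠ[nhds p.1] (fun _ => (0:ℝ)) := by
    filter_upwards [hc.preimage_mem_nhds hmem] with t ht using hA _ ht
  rw [← h.deriv, hev.deriv_eq, deriv_const']

lemma slice_deriv_zero_y {Ω : Set (ℝ × ℝ)} (hΩ : IsOpen Ω) {A : ℝ × ℝ → ℝ}
    (hA : ∀ z ∈ Ω, A z = 0) {p : ℝ × ℝ} (hp : p ∈ Ω) {c : ℝ}
    (h : HasDerivAt (fun t => A (p.1, t)) c p.2) : c = 0 := by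
  have hc : ContinuousAt (fun t : ℝ => (p.1, t)) p.2 :=
    (continuous_const.prodMk continuous_id).continuousAt
  have hmem : Ω ∈ nhds (p.1, p.2) := by rw [Prod.mk.eta]; exact hΩ.mem_nhds hp
  have hev : (fun t => A (p.1, t)) =ᶠ[nhds p.2] (fun _ => (0:ℝ)) := by
    filter_upwards [hc.preimage_mem_nhds hmem] with t ht using hA _ ht
  rw [← h.deriv, hev.deriv_eq, deriv_const']

/-- a solution of the degenerate Monge–Ampère equation satisfying the
third-order relation `q q_xy q_yyy + q_y q_xy q_yy = q q_yy q_xyy + q_x q_yy²` is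
homogeneous of degree 1 after a translation. -/
theorem third_order_relation_implies_homogeneous
    (Ω : Set (ℝ × ℝ)) (hΩ : IsOpen Ω) (hconv : Convex ℝ Ω)
    (q : ℝ × ℝ → ℝ) (hq : ContDiffOn ℝ (⊤ : ℕ∞) q Ω)
    (hq0 : ∀ p ∈ Ω, q p ≠ 0)
    (hqyy : ∀ p ∈ Ω, py (py q) p ≠ 0)
    (hqxy : ∀ p ∈ Ω, py (px q) p ≠ 0)
    (hdenom : ∀ p ∈ Ω, px q p * py (py q) p - py q p * py (px q) p ≠ 0)
    (hMA : ∀ p ∈ Ω, px (px q) p * py (py q) p = (py (px q) p) ^ 2)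
    (hthird : ∀ p ∈ Ω,
      q p * py (px q) p * py (py (py q)) p + py q p * py (px q) p * py (py q) p =
        q p * py (py q) p * py (py (px q)) p + px q p * (py (py q) p) ^ 2) :
    ∃ x₀ y₀ : ℝ, ∀ p ∈ Ω,
      (p.1 - x₀) * px q p + (p.2 - y₀) * py q p = q p := by
  rcases Set.eq_empty_or_nonempty Ω with hemp | ⟨p₀, hp₀⟩
  · exact ⟨0, 0, fun p hp => absurd hp (by simp [hemp])⟩
  set qx := px q with hqxdef
  set qy := py q with hqydef
  set qxx := px qx with hqxxdef
  set qxy := py qx with hqxydef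
  set qyy := py qy with hqyydef
  set qxyy := py qxy with hqxyydef
  set qyyy := py qyy with hqyyydef
  have diffat : ∀ {g : ℝ × ℝ → ℝ}, ContDiffOn ℝ (⊤ : ℕ∞) g Ω →
      ∀ {z : ℝ × ℝ}, z ∈ Ω → DifferentiableAt ℝ g z := by
    intro g hg z hz
    exact (hg.contDiffAt (hΩ.mem_nhds hz)).differentiableAt (by simp)
  have cqx : ContDiffOn ℝ (⊤ : ℕ∞) qx Ω := contDiffOn_px hΩ hq
  have cqy : ContDiffOn ℝ (⊤ : ℕ∞) qy Ω := contDiffOn_py hΩ hq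
  have cqxx : ContDiffOn ℝ (⊤ : ℕ∞) qxx Ω := contDiffOn_px hΩ cqx
  have cqxy : ContDiffOn ℝ (⊤ : ℕ∞) qxy Ω := contDiffOn_py hΩ cqx
  have cqyy : ContDiffOn ℝ (⊤ : ℕ∞) qyy Ω := contDiffOn_py hΩ cqy
  set D : ℝ × ℝ → ℝ := fun z => qx z * qyy z - qy z * qxy z with hDdef
  have hD0 : ∀ z ∈ Ω, D z ≠ 0 := fun z hz => hdenom z hz
  have cD : ContDiffOn ℝ (⊤ : ℕ∞) D Ω := (cqx.mul cqyy).sub (cqy.mul cqxy)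
  set X : ℝ × ℝ → ℝ := fun z => q z * qyy z / D z with hXdef
  set Y : ℝ × ℝ → ℝ := fun z => -(q z * qxy z) / D z with hYdef
  have cX : ContDiffOn ℝ (⊤ : ℕ∞) X Ω := (hq.mul cqyy).div cD hD0
  have cY : ContDiffOn ℝ (⊤ : ℕ∞) Y Ω := (hq.mul cqxy).neg.div cD hD0
  have hXD : ∀ z ∈ Ω, X z * D z = q z * qyy z := by
    intro z hz; simp only [hXdef]; exact div_mul_cancel₀ _ (hD0 z hz)
  have hYD : ∀ z ∈ Ω, Y z * D z = -(q z * qxy z) := by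
    intro z hz; simp only [hYdef]; exact div_mul_cancel₀ _ (hD0 z hz)
  have I1 : ∀ z ∈ Ω, X z * qx z + Y z * qy z - q z = 0 := by
    intro z hz
    have hD := hD0 z hz
    simp only [hXdef, hYdef]
    field_simp
    simp only [hDdef]
    ring
  have I2 : ∀ z ∈ Ω, X z * qxx z + Y z * qxy z = 0 := by
    intro z hz
    have hD := hD0 z hz
    simp only [hXdef, hYdef]
    field_simp
    linear_combination q z * hMA z hz
  have I3 : ∀ z ∈ Ω, X z * qxy z + Y z * qyy z = 0 := by
    intro z hz
    have hD := hD0 z hz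
    simp only [hXdef, hYdef]
    field_simp
    ring
  have hpxqy : ∀ z ∈ Ω, px qy z = qxy z := fun z hz => schwarz hΩ hq hz
  have main : ∀ p ∈ Ω, px X p = 1 ∧ px Y p = 0 ∧ py X p = 0 ∧ py Y p = 1 := by
    intro p hp
    have hDp := hD0 p hp
    have hDexp : D p = qx p * qyy p - qy p * qxy p := by rw [hDdef]
    -- slice derivatives
    have dX_x := hasDerivAt_slice_x (diffat cX hp)
    have dX_y := hasDerivAt_slice_y (diffat cX hp)
    have dY_x := hasDerivAt_slice_x (diffat cY hp)
    have dY_y := hasDerivAt_slice_y (diffat cY hp)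
    have dq_x := hasDerivAt_slice_x (diffat hq hp)
    have dq_y := hasDerivAt_slice_y (diffat hq hp)
    have dqx_x := hasDerivAt_slice_x (diffat cqx hp)
    have dqx_y := hasDerivAt_slice_y (diffat cqx hp)
    have dqy_x := hasDerivAt_slice_x (diffat cqy hp)
    have dqy_y := hasDerivAt_slice_y (diffat cqy hp)
    have dqxx_y := hasDerivAt_slice_y (diffat cqxx hp)
    have dqxy_x := hasDerivAt_slice_x (diffat cqxy hp)
    have dqxy_y := hasDerivAt_slice_y (diffat cqxy hp)
    have dqyy_x := hasDerivAt_slice_x (diffat cqyy hp)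
    have dqyy_y := hasDerivAt_slice_y (diffat cqyy hp)
    -- mixed-partials rewrites
    have hpxqy_p : px qy p = qxy p := hpxqy p hp
    have hpxqxy : px qxy p = py qxx p := schwarz hΩ cqx hp
    have hpxqyy : px qyy p = qxyy p :=
      (schwarz hΩ cqy hp).trans (py_congr hΩ hpxqy hp)
    -- MA differentiated in y
    have e2y : py qxx p * qyy p + qxx p * qyyy p - 2 * qxy p ^ 1 * qxyy p = 0 := by
      refine slice_deriv_zero_y hΩ (A := fun z => qxx z * qyy z - qxy z ^ 2)
        (fun z hz => by linear_combination hMA z hz) hp ?_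
      exact (dqxx_y.mul dqyy_y).sub (dqxy_y.pow 2)
    have h3 := hthird p hp
    have hMAp := hMA p hp
    have hXDp := hXD p hp
    have hYDp := hYD p hp
    -- key1 : X C + Y E = -t
    have key1 : X p * qxyy p + Y p * qyyy p = -(qyy p) := by
      have hbig : (X p * qxyy p + Y p * qyyy p + qyy p) * D p = 0 := by
        linear_combination qxyy p * hXDp + qyyy p * hYDp + qyy p * hDexp - h3
      have := (mul_eq_zero.mp hbig).resolve_right hDp
      linarith
    -- key2 : X B + Y C = -s, where B = py qxx p
    have key2 : X p * py qxx p + Y p * qxyy p = -(qxy p) := by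
      have hq2 : qyy p * ((X p * py qxx p + Y p * qxyy p + qxy p) * D p) = 0 := by
        linear_combination (qyy p * py qxx p) * hXDp + (qyy p * qxyy p) * hYDp +
          (qyy p * qxy p) * hDexp + q p * qyy p * e2y - q p * qyyy p * hMAp - qxy p * h3
      have h1 := (mul_eq_zero.mp hq2).resolve_left (hqyy p hp)
      have := (mul_eq_zero.mp h1).resolve_right hDp
      linarith
    -- differentiated identities
    have e1y : py X p * qx p + X p * qxy p + (py Y p * qy p + Y p * qyy p) - qy p = 0 := by
      refine slice_deriv_zero_y hΩ (A := fun z => X z * qx z + Y z * qy z - q z) I1 hp ?_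
      exact ((dX_y.mul dqx_y).add (dY_y.mul dqy_y)).sub dq_y
    have e3y : py X p * qxy p + X p * qxyy p + (py Y p * qyy p + Y p * qyyy p) = 0 := by
      refine slice_deriv_zero_y hΩ (A := fun z => X z * qxy z + Y z * qyy z) I3 hp ?_
      exact (dX_y.mul dqxy_y).add (dY_y.mul dqyy_y)
    have e1x : px X p * qx p + X p * qxx p + (px Y p * qy p + Y p * px qy p) - qx p = 0 := by
      refine slice_deriv_zero_x hΩ (A := fun z => X z * qx z + Y z * qy z - q z) I1 hp ?_
      exact ((dX_x.mul dqx_x).add (dY_x.mul dqy_x)).sub dq_x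
    have e3x : px X p * qxy p + X p * px qxy p + (px Y p * qyy p + Y p * px qyy p) = 0 := by
      refine slice_deriv_zero_x hΩ (A := fun z => X z * qxy z + Y z * qyy z) I3 hp ?_
      exact (dX_x.mul dqxy_x).add (dY_x.mul dqyy_x)
    rw [hpxqy_p] at e1x
    rw [hpxqxy, hpxqyy] at e3x
    have hI2p := I2 p hp
    have hI3p := I3 p hp
    -- solve the linear systems
    have hu : py X p = 0 := by
      have h5 : py X p * D p = 0 := by
        linear_combination py X p * hDexp + qyy p * e1y - qy p * e3y -
          qyy p * hI3p + qy p * key1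
      exact (mul_eq_zero.mp h5).resolve_right hDp
    have hv : py Y p = 1 := by
      have h6 : (py Y p - 1) * qyy p = 0 := by
        linear_combination e3y - key1 - qxy p * hu
      have := (mul_eq_zero.mp h6).resolve_right (hqyy p hp)
      linarith
    have hw : px X p = 1 := by
      have h7 : (px X p - 1) * D p = 0 := by
        linear_combination (px X p - 1) * hDexp + qyy p * e1x - qy p * e3x -
          qyy p * hI2p + qy p * key2
      have := (mul_eq_zero.mp h7).resolve_right hDp
      linarith
    have hz : px Y p = 0 := by
      have h8 : px Y p * qyy p = 0 := by
        linear_combination e3x - key2 - qxy p * hw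
      exact (mul_eq_zero.mp h8).resolve_right (hqyy p hp)
    exact ⟨hw, hz, hu, hv⟩
  -- the center functions
  set f : ℝ × ℝ → ℝ := fun z => z.1 - X z with hfdef
  set g : ℝ × ℝ → ℝ := fun z => z.2 - Y z with hgdef
  have cf : ContDiffOn ℝ (⊤ : ℕ∞) f Ω := contDiff_fst.contDiffOn.sub cX
  have cg : ContDiffOn ℝ (⊤ : ℕ∞) g Ω := contDiff_snd.contDiffOn.sub cY
  have hfderiv : ∀ {F : ℝ × ℝ → ℝ}, ContDiffOn ℝ (⊤ : ℕ∞) F Ω →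
      (∀ z ∈ Ω, px F z = 0) → (∀ z ∈ Ω, py F z = 0) → ∀ z ∈ Ω, fderiv ℝ F z = 0 := by
    intro F cF hx hy z hz
    have hdf : DifferentiableAt ℝ F z := diffat cF hz
    have e1 : fderiv ℝ F z (1, 0) = 0 := by rw [← px_eq_fderiv hdf]; exact hx z hz
    have e2 : fderiv ℝ F z (0, 1) = 0 := by rw [← py_eq_fderiv hdf]; exact hy z hz
    refine ContinuousLinearMap.ext fun v => ?_
    have hv : v = v.1 • ((1 : ℝ), (0 : ℝ)) + v.2 • ((0 : ℝ), (1 : ℝ)) := by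
      simp [Prod.ext_iff]
    rw [show (fderiv ℝ F z) v = (fderiv ℝ F z) (v.1 • ((1 : ℝ), (0 : ℝ)) +
      v.2 • ((0 : ℝ), (1 : ℝ))) from by rw [← hv]]
    rw [map_add, map_smul, map_smul, e1, e2]
    simp
  have hpxf : ∀ z ∈ Ω, px f z = 0 := by
    intro z hz
    have h := (hasDerivAt_id z.1).sub (hasDerivAt_slice_x (diffat cX hz))
    have : px f z = 1 - px X z := h.deriv
    simp [this, (main z hz).1]
  have hpyf : ∀ z ∈ Ω, py f z = 0 := by
    intro z hz
    have h := (hasDerivAt_const z.2 z.1).sub (hasDerivAt_slice_y (diffat cX hz))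
    have : py f z = 0 - py X z := h.deriv
    simp [this, (main z hz).2.2.1]
  have hpxg : ∀ z ∈ Ω, px g z = 0 := by
    intro z hz
    have h := (hasDerivAt_const z.1 z.2).sub (hasDerivAt_slice_x (diffat cY hz))
    have : px g z = 0 - px Y z := h.deriv
    simp [this, (main z hz).2.1]
  have hpyg : ∀ z ∈ Ω, py g z = 0 := by
    intro z hz
    have h := (hasDerivAt_id z.2).sub (hasDerivAt_slice_y (diffat cY hz))
    have : py g z = 1 - py Y z := h.deriv
    simp [this, (main z hz).2.2.2]
  have hconst : ∀ {F : ℝ × ℝ → ℝ}, ContDiffOn ℝ (⊤ : ℕ∞) F Ω →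
      (∀ z ∈ Ω, fderiv ℝ F z = 0) → ∀ p ∈ Ω, F p = F p₀ := by
    intro F cF h0 p hp
    have hdiffon : DifferentiableOn ℝ F Ω := cF.differentiableOn (by simp)
    have hb := hconv.norm_image_sub_le_of_norm_fderivWithin_le hdiffon
      (fun x hx => by rw [fderivWithin_of_isOpen hΩ hx, h0 x hx]) hp₀ hp
    have : ‖F p - F p₀‖ ≤ 0 := by simpa using hb
    have := norm_le_zero_iff.mp this
    linarith [sub_eq_zero.mp this]
  refine ⟨f p₀, g p₀, fun p hp => ?_⟩
  have hfp : f p = f p₀ := hconst cf (hfderiv cf hpxf hpyf) p hp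
  have hgp : g p = g p₀ := hconst cg (hfderiv cg hpxg hpyg) p hp
  rw [← hfp, ← hgp]
  have h1 : p.1 - f p = X p := by simp [hfdef]
  have h2 : p.2 - g p = Y p := by simp [hgdef]
  rw [h1, h2]
  linarith [I1 p hp]
end
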